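/- Let M ≥ 3 be odd and let p, q, c0, c1, c2 be real numbers. Let A be the M×M real symmetric matrix with A_{uu} = p + c0 for u < M; A_{2i−1, 2i} = A_{2i, 2i−1} = p + c2 for 1 ≤ i ≤ (M−1)/2; A_{uv} = p for all other pairs u ≠ v with u, v < M; A_{uM} = A_{Mu} = q for u < M; and A_{MM} = p + c1. Then the characteristic polynomial of A factors as det(X·I − A) = (X − (c0 + c2))^{(M−3)/2} · (X − (c0 − c2))^{(M−1)/2} · (X² − (c0 + c1 + c2 + pM)·X + (c0·c1 + c1·c2 + c0·p + (M−1)·c1·p + c2·p + (M−1)·(p² − q²))). -/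

import Mathlib

open Matrix Polynomial

/-- The structure of the next generation matrix of the star-triangle network
with one heterogeneous node: the first `M−1` (0-based: `0,…,M−2`) indices are
grouped into disjoint pairs `(2i−1, 2i)` (0-based: `u/2 = v/2`); pairs carry
off-diagonal entry `p + c2`, other off-diagonal entries among the first
`M−1` indices equal `p`, the last row/column carry `q`, and the diagonal is
`(p+c0, …, p+c0, p+c1)`. -/
noncomputable def starTriangleShape (M : ℕ) (p q c0 c1 c2 : ℝ) :
    Matrix (Fin M) (Fin M) ℝ :=
  Matrix.of fun u v =>
    if u = v then (if (u : ℕ) = M - 1 then p + c1 else p + c0)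
    else if (u : ℕ) = M - 1 ∨ (v : ℕ) = M - 1 then q
    else if (u : ℕ) / 2 = (v : ℕ) / 2 then p + c2 else p

lemma aux_rowsum (K : ℕ) (x c0 c2 : ℝ) (i : Fin (K*2)) :
    ∑ j : Fin (K*2), (if i = j then x - c0 else if (i:ℕ)/2 = (j:ℕ)/2 then -c2 else (0:ℝ))
      = x - c0 - c2 := by
  have hi := i.isLt
  obtain ⟨σ, hσ⟩ : ∃ σ : Fin (K*2), (σ:ℕ) = 2*((i:ℕ)/2) + (1 - (i:ℕ)%2) :=
    ⟨⟨2*((i:ℕ)/2) + (1 - (i:ℕ)%2), by omega⟩, rfl⟩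
  have key : ∀ j : Fin (K*2),
      (if i = j then x - c0 else if (i:ℕ)/2 = (j:ℕ)/2 then -c2 else (0:ℝ))
        = (if j = i then x - c0 else 0) + (if j = σ then -c2 else 0) := by
    intro j
    have hj := j.isLt
    simp only [Fin.ext_iff]
    split_ifs <;> first | ring1 | (exfalso; omega)
  rw [Finset.sum_congr rfl (fun j _ => key j), Finset.sum_add_distrib]
  simp [Finset.sum_ite_eq', sub_eq_add_neg, add_assoc]

lemma aux_det (K : ℕ) (hK : 1 ≤ K) (x p q c0 c1 c2 : ℝ)
    (hd : x - (p + c1) ≠ 0) (hs : x - (c0 + c2) ≠ 0) :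
    (x • (1 : Matrix (Fin (K*2+1)) (Fin (K*2+1)) ℝ)
        - starTriangleShape (K*2+1) p q c0 c1 c2).det
      = (x - (c0 + c2)) ^ (K - 1) * (x - (c0 - c2)) ^ K *
        (x ^ 2 - (c0 + c1 + c2 + p * (2*(K:ℝ)+1)) * x
          + (c0*c1 + c1*c2 + c0*p + (2*(K:ℝ))*c1*p + c2*p
              + (2*(K:ℝ))*(p^2 - q^2))) := by
  classical
  set G : Matrix (Fin (K*2)) (Fin (K*2)) ℝ :=
    Matrix.of (fun i j => if i = j then x - (p + c0)
      else if (i:ℕ)/2 = (j:ℕ)/2 then -(p + c2) else -p) with hG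
  set Bb : Matrix (Fin (K*2)) (Fin 1) ℝ := Matrix.of (fun _ _ => -q) with hBb
  set Cb : Matrix (Fin 1) (Fin (K*2)) ℝ := Matrix.of (fun _ _ => -q) with hCb
  set Db : Matrix (Fin 1) (Fin 1) ℝ := Matrix.of (fun _ _ => x - (p + c1)) with hDb
  have hsub : ((x • (1 : Matrix (Fin (K*2+1)) (Fin (K*2+1)) ℝ)
        - starTriangleShape (K*2+1) p q c0 c1 c2).submatrix
      (finSumFinEquiv (m := K*2) (n := 1)) finSumFinEquiv) = Matrix.fromBlocks G Bb Cb Db := by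
    ext i j
    rcases i with i | i <;> rcases j with j | j <;>
      [skip; skip; skip; skip] <;>
      (try have hi := i.isLt) <;> (try have hj := j.isLt) <;>
      simp only [Matrix.submatrix_apply, finSumFinEquiv_apply_left, finSumFinEquiv_apply_right,
        Matrix.fromBlocks_apply₁₁, Matrix.fromBlocks_apply₁₂, Matrix.fromBlocks_apply₂₁,
        Matrix.fromBlocks_apply₂₂, Matrix.sub_apply, Matrix.smul_apply, Matrix.one_apply,
        starTriangleShape, Matrix.of_apply, smul_eq_mul, hG, hBb, hCb, hDb,
        Fin.ext_iff, Fin.coe_castAdd, Fin.coe_natAdd] <;>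
      split_ifs <;> first | ring1 | (exfalso; omega)
  have hDbmul : Db * (Matrix.of (fun _ _ => (x - (p + c1))⁻¹) : Matrix (Fin 1) (Fin 1) ℝ) = 1 := by
    ext i j
    simp [hDb, Matrix.mul_apply, Matrix.one_apply, Subsingleton.elim i j,
      mul_inv_cancel₀ hd]
  haveI : Invertible Db := invertibleOfRightInverse Db _ hDbmul
  have hinv : ⅟Db = (Matrix.of (fun _ _ => (x - (p + c1))⁻¹) : Matrix (Fin 1) (Fin 1) ℝ) :=
    invOf_eq_right_inv hDbmul
  have hdet1 : (x • (1 : Matrix (Fin (K*2+1)) (Fin (K*2+1)) ℝ)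
        - starTriangleShape (K*2+1) p q c0 c1 c2).det
      = (x - (p + c1)) * (G - Bb * ⅟Db * Cb).det := by
    rw [← Matrix.det_submatrix_equiv_self finSumFinEquiv, hsub, Matrix.det_fromBlocks₂₂]
    congr 1
    simp [Matrix.det_fin_one, hDb]
  set r : ℝ := q^2 * (x - (p + c1))⁻¹ with hr
  have hBDC : Bb * ⅟Db * Cb = Matrix.of (fun _ _ => r) := by
    rw [hinv]
    ext i j
    simp [hBb, hCb, Matrix.mul_apply, hr]
    ring
  set N : Matrix (Fin (K*2)) (Fin (K*2)) ℝ :=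
    Matrix.of (fun i j => if i = j then x - c0
      else if (i:ℕ)/2 = (j:ℕ)/2 then -c2 else 0) with hN
  set w0 : ℝ := -(p + r) * (x - (c0 + c2))⁻¹ with hw0
  have hNcol : N * Matrix.replicateCol (Fin 1) (fun _ : Fin (K*2) => w0) = Matrix.replicateCol (Fin 1) (fun _ : Fin (K*2) => -(p + r)) := by
    ext i z
    simp only [Matrix.mul_apply, Matrix.replicateCol_apply, hN, Matrix.of_apply]
    rw [← Finset.sum_mul, aux_rowsum K x c0 c2 i, hw0]
    have : x - c0 - c2 = x - (c0 + c2) := by ring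
    rw [this]
    field_simp
  have hfac : G - Matrix.of (fun _ _ => r)
      = N * (1 + Matrix.replicateCol (Fin 1) (fun _ : Fin (K*2) => w0) * Matrix.replicateRow (Fin 1) (fun _ : Fin (K*2) => (1:ℝ))) := by
    rw [Matrix.mul_add, Matrix.mul_one, ← Matrix.mul_assoc, hNcol]
    ext i j
    simp only [Matrix.sub_apply, Matrix.add_apply, Matrix.of_apply, hG, hN,
      Matrix.mul_apply, Matrix.replicateCol_apply, Matrix.replicateRow_apply, Finset.univ_unique,
      Finset.sum_singleton, mul_one]
    split_ifs <;> ring1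
  set e : Fin 2 × Fin K ≃ Fin (K*2) := (Equiv.prodComm (Fin 2) (Fin K)).trans finProdFinEquiv
    with he
  set M2 : Matrix (Fin 2) (Fin 2) ℝ :=
    Matrix.of (fun a b => if a = b then x - c0 else -c2) with hM2
  have heval : ∀ (a : Fin 2) (k : Fin K), ((e (a, k) : ℕ)) = (a : ℕ) + 2 * (k : ℕ) := by
    intro a k
    simp [he, finProdFinEquiv_apply_val]
  have hsubN : N.submatrix e e = Matrix.blockDiagonal (fun _ : Fin K => M2) := by
    ext ⟨a, k⟩ ⟨b, l⟩
    have ha := a.isLt; have hb := b.isLt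
    have h1 := heval a k; have h2 := heval b l
    simp only [Matrix.submatrix_apply, Matrix.blockDiagonal_apply, hN, hM2, Matrix.of_apply,
      Fin.ext_iff]
    split_ifs <;> first | ring1 | (exfalso; omega)
  have hdetN : N.det = ((x - (c0 + c2)) * (x - (c0 - c2))) ^ K := by
    rw [← Matrix.det_submatrix_equiv_self e, hsubN, Matrix.det_blockDiagonal]
    have : M2.det = (x - (c0 + c2)) * (x - (c0 - c2)) := by
      rw [Matrix.det_fin_two]
      simp [hM2]
      ring
    simp [this]
  have hdot : (fun _ => (1:ℝ)) ⬝ᵥ (fun _ : Fin (K*2) => w0) = (K*2 : ℕ) * w0 := by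
    simp [dotProduct, Finset.sum_const, nsmul_eq_mul]
  have hdet2 : (x • (1 : Matrix (Fin (K*2+1)) (Fin (K*2+1)) ℝ)
        - starTriangleShape (K*2+1) p q c0 c1 c2).det
      = (x - (p + c1)) * (((x - (c0 + c2)) * (x - (c0 - c2))) ^ K * (1 + (K*2 : ℕ) * w0)) := by
    rw [hdet1, hBDC, hfac, Matrix.det_mul]
    erw [Matrix.det_one_add_replicateCol_mul_replicateRow]
    rw [hdot, hdetN]
  rw [hdet2]
  obtain ⟨K', rfl⟩ : ∃ K', K = K' + 1 := ⟨K - 1, by omega⟩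
  simp only [Nat.add_sub_cancel]
  rw [mul_pow, pow_succ (x - (c0 + c2))]
  rw [hw0, hr]
  push_cast
  field_simp
  ring

theorem starTriangleShape_charpoly (M : ℕ) (hM : 3 ≤ M) (hModd : Odd M)
    (p q c0 c1 c2 : ℝ) :
    (starTriangleShape M p q c0 c1 c2).charpoly
      = (X - C (c0 + c2)) ^ ((M - 3) / 2) *
        (X - C (c0 - c2)) ^ ((M - 1) / 2) *
        (X ^ 2 - C (c0 + c1 + c2 + p * (M : ℝ)) * X
          + C (c0 * c1 + c1 * c2 + c0 * p + ((M : ℝ) - 1) * c1 * p + c2 * p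
              + ((M : ℝ) - 1) * (p ^ 2 - q ^ 2))) := by
  obtain ⟨K, rfl⟩ : ∃ K, M = K * 2 + 1 := by
    obtain ⟨k, hk⟩ := hModd; exact ⟨k, by omega⟩
  have hK : 1 ≤ K := by omega
  apply Polynomial.eq_of_infinite_eval_eq
  have hinf : (({p + c1, c0 + c2} : Set ℝ)ᶜ).Infinite :=
    Set.Finite.infinite_compl (Set.toFinite _)
  refine hinf.mono ?_
  intro x hx
  simp only [Set.mem_compl_iff, Set.mem_insert_iff, Set.mem_singleton_iff, not_or] at hx
  obtain ⟨hx1, hx2⟩ := hx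
  have hd : x - (p + c1) ≠ 0 := sub_ne_zero.mpr hx1
  have hs : x - (c0 + c2) ≠ 0 := sub_ne_zero.mpr hx2
  simp only [Set.mem_setOf_eq]
  have hev : eval x (starTriangleShape (K*2+1) p q c0 c1 c2).charpoly
      = (x • (1 : Matrix (Fin (K*2+1)) (Fin (K*2+1)) ℝ)
          - starTriangleShape (K*2+1) p q c0 c1 c2).det := by
    rw [Matrix.charpoly, show (eval x : ℝ[X] → ℝ) = ⇑(evalRingHom x) from rfl,
      RingHom.map_det]
    congr 1
    ext i j
    by_cases h : i = j
    · subst h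
      simp [Matrix.map_apply, Matrix.charmatrix_apply_eq, Matrix.sub_apply,
        Matrix.smul_apply, Matrix.one_apply_eq, smul_eq_mul]
    · simp [Matrix.map_apply, Matrix.charmatrix_apply_ne _ _ _ h, Matrix.sub_apply,
        Matrix.smul_apply, Matrix.one_apply_ne h, h, smul_eq_mul]
  rw [hev, aux_det K hK x p q c0 c1 c2 hd hs]
  have e1 : (K * 2 + 1 - 3) / 2 = K - 1 := by omega
  have e2 : (K * 2 + 1 - 1) / 2 = K := by omega
  simp only [eval_mul, eval_pow, eval_sub, eval_add, eval_X, eval_C, e1, e2]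
  push_cast
  ring
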